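/- The quaternary Rudin–Shapiro sequence u contains no palindromic factor of length 8 and none of length 9; consequently u contains no palindromic factor of any length m ≥ 8, and u is not palindromic. -/
import Mathlib


/-- First letters of the substitution `σ : a ↦ ab, b ↦ ac, c ↦ db, d ↦ dc`
(letters `a = 0, b = 1, c = 2, d = 3`). -/
def rsQFst : Fin 4 → Fin 4 := ![0, 0, 3, 3]

/-- Second letters of the substitution `σ : a ↦ ab, b ↦ ac, c ↦ db, d ↦ dc`. -/
def rsQSnd : Fin 4 → Fin 4 := ![1, 2, 1, 2]

/-- The quaternary Rudin–Shapiro sequence: the fixed point of `σ` starting with `a`,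
given by `u 0 = a`, `u (2n) = ` first letter of `σ (u n)`, `u (2n+1) = ` second
letter of `σ (u n)`. -/
def rsQ : ℕ → Fin 4
  | 0 => 0
  | (n + 1) =>
      if (n + 1) % 2 = 0 then rsQFst (rsQ ((n + 1) / 2))
      else rsQSnd (rsQ ((n + 1) / 2))
  decreasing_by all_goals exact Nat.div_lt_self (Nat.succ_pos n) one_lt_two

/-- The sequence `x` contains a palindromic factor of length `ℓ`. -/
def HasPalFactor {A : Type*} (x : ℕ → A) (ℓ : ℕ) : Prop :=
  ∃ i : ℕ, ∀ j < ℓ, x (i + j) = x (i + ℓ - 1 - j)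

/-- The sequence `x` is palindromic: it contains palindromic factors of
arbitrarily large length. -/
def Palindromic {A : Type*} (x : ℕ → A) : Prop :=
  ∀ N : ℕ, ∃ ℓ : ℕ, N ≤ ℓ ∧ HasPalFactor x ℓ

lemma rsQ_zero : rsQ 0 = 0 := by rw [rsQ]

lemma rsQ_two_mul (n : ℕ) : rsQ (2 * n) = rsQFst (rsQ n) := by
  cases n with
  | zero => rw [show 2 * 0 = 0 by rfl, rsQ_zero]; decide
  | succ m =>
    rw [show 2 * (m + 1) = (2 * m + 1) + 1 by ring, rsQ]
    have h1 : (2 * m + 1 + 1) % 2 = 0 := by omega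
    have h2 : (2 * m + 1 + 1) / 2 = m + 1 := by omega
    rw [if_pos h1, h2]

lemma rsQ_two_mul_add_one (n : ℕ) : rsQ (2 * n + 1) = rsQSnd (rsQ n) := by
  have h1 : ¬ (2 * n + 1) % 2 = 0 := by omega
  have h2 : (2 * n + 1) / 2 = n := by omega
  rw [show 2 * n + 1 = (2 * n) + 1 by rfl, rsQ, if_neg h1, h2]

/-- `eB n` : the letter `rsQ n` is `c` or `d`. -/
def eB (n : ℕ) : Bool := decide (rsQ n = 2 ∨ rsQ n = 3)
/-- `fB n` : the letter `rsQ n` is `b` or `d`. -/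
def fB (n : ℕ) : Bool := decide (rsQ n = 1 ∨ rsQ n = 3)

lemma eB_congr {a b : ℕ} (h : rsQ a = rsQ b) : eB a = eB b := by unfold eB; rw [h]
lemma fB_congr {a b : ℕ} (h : rsQ a = rsQ b) : fB a = fB b := by unfold fB; rw [h]

lemma eB_even (n : ℕ) : eB (2 * n) = eB n := by
  unfold eB; rw [rsQ_two_mul]
  generalize rsQ n = a; revert a; decide

lemma fB_even (n : ℕ) : fB (2 * n) = eB n := by
  unfold eB fB; rw [rsQ_two_mul]
  generalize rsQ n = a; revert a; decide

lemma eB_odd (n : ℕ) : eB (2 * n + 1) = fB n := by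
  unfold eB fB; rw [rsQ_two_mul_add_one]
  generalize rsQ n = a; revert a; decide

lemma fB_odd (n : ℕ) : fB (2 * n + 1) = ! fB n := by
  unfold fB; rw [rsQ_two_mul_add_one]
  generalize rsQ n = a; revert a; decide

lemma eB_eq_fB {n : ℕ} (h : n % 2 = 0) : eB n = fB n := by
  obtain ⟨m, rfl⟩ : ∃ m, n = 2 * m := ⟨n / 2, by omega⟩
  rw [eB_even, fB_even]

lemma eB_eq_not_fB {n : ℕ} (h : n % 2 = 1) : eB n = ! fB n := by
  obtain ⟨m, rfl⟩ : ∃ m, n = 2 * m + 1 := ⟨n / 2, by omega⟩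
  rw [eB_odd, fB_odd, Bool.not_not]

lemma pair_even {m : ℕ} (h : m % 2 = 0) : fB (2 * m) ≠ fB (2 * m + 1) := by
  rw [fB_even, fB_odd, eB_eq_fB h]
  cases fB m <;> simp

lemma pair_odd {m : ℕ} (h : m % 2 = 1) : fB (2 * m) = fB (2 * m + 1) := by
  rw [fB_even, fB_odd, eB_eq_not_fB h]

lemma rsQ_even_val (n : ℕ) : rsQ (2 * n) = 0 ∨ rsQ (2 * n) = 3 := by
  rw [rsQ_two_mul]; generalize rsQ n = a; revert a; decide

lemma rsQ_odd_val (n : ℕ) : rsQ (2 * n + 1) = 1 ∨ rsQ (2 * n + 1) = 2 := by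
  rw [rsQ_two_mul_add_one]; generalize rsQ n = a; revert a; decide

lemma no_pal8 : ¬ HasPalFactor rsQ 8 := by
  rintro ⟨i, h⟩
  have h0 := h 0 (by norm_num)
  obtain ⟨m, hm⟩ : ∃ m, i = 2 * m ∨ i = 2 * m + 1 := ⟨i / 2, by omega⟩
  rcases hm with rfl | rfl
  · rw [show 2 * m + 0 = 2 * m by omega,
      show 2 * m + 8 - 1 - 0 = 2 * (m + 3) + 1 by omega] at h0
    rcases rsQ_even_val m with hA | hA <;> rcases rsQ_odd_val (m + 3) with hB | hB <;>
      rw [hA, hB] at h0 <;> exact absurd h0 (by decide)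
  · rw [show 2 * m + 1 + 0 = 2 * m + 1 by omega,
      show 2 * m + 1 + 8 - 1 - 0 = 2 * (m + 4) by omega] at h0
    rcases rsQ_odd_val m with hA | hA <;> rcases rsQ_even_val (m + 4) with hB | hB <;>
      rw [hA, hB] at h0 <;> exact absurd h0 (by decide)

lemma fB_same_parity {a b : ℕ} (hp : a % 2 = b % 2) (h : eB a = eB b) : fB a = fB b := by
  rcases Nat.mod_two_eq_zero_or_one a with ha | ha
  · have h1 : a % 2 = 0 := by omega
    have h2 : b % 2 = 0 := by omega
    rw [eB_eq_fB h1, eB_eq_fB h2] at h; exact h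
  · have h1 : a % 2 = 1 := by omega
    have h2 : b % 2 = 1 := by omega
    rw [eB_eq_not_fB h1, eB_eq_not_fB h2] at h
    exact Bool.not_inj h

lemma fB_diff_parity {a b : ℕ} (hp : a % 2 ≠ b % 2) (h : eB a = eB b) : fB a = ! fB b := by
  rcases Nat.mod_two_eq_zero_or_one a with ha | ha
  · have h1 : a % 2 = 0 := by omega
    have h2 : b % 2 = 1 := by omega
    rw [eB_eq_fB h1, eB_eq_not_fB h2] at h; exact h
  · have h1 : a % 2 = 1 := by omega
    have h2 : b % 2 = 0 := by omega
    rw [eB_eq_not_fB h1, eB_eq_fB h2] at h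
    rw [← h, Bool.not_not]

lemma no_pal9 : ¬ HasPalFactor rsQ 9 := by
  rintro ⟨i, h⟩
  obtain ⟨k, hk⟩ : ∃ k, i = 2 * k ∨ i = 2 * k + 1 := ⟨i / 2, by omega⟩
  rcases hk with rfl | rfl
  · -- even start: fB must be constant on [k, k+4]
    have hA := h 0 (by norm_num); have hB := h 1 (by norm_num)
    have hC := h 2 (by norm_num); have hD := h 3 (by norm_num)
    rw [show 2 * k + 0 = 2 * k by omega,
      show 2 * k + 9 - 1 - 0 = 2 * (k + 4) by omega] at hA
    rw [show 2 * k + 9 - 1 - 1 = 2 * (k + 3) + 1 by omega] at hB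
    rw [show 2 * k + 2 = 2 * (k + 1) by omega,
      show 2 * k + 9 - 1 - 2 = 2 * (k + 3) by omega] at hC
    rw [show 2 * k + 3 = 2 * (k + 1) + 1 by omega,
      show 2 * k + 9 - 1 - 3 = 2 * (k + 2) + 1 by omega] at hD
    have e04 : eB k = eB (k + 4) := by
      have := eB_congr hA; rwa [eB_even, eB_even] at this
    have f03 : fB k = fB (k + 3) := by
      have := fB_congr hB; rw [fB_odd, fB_odd] at this; exact Bool.not_inj this
    have e13 : eB (k + 1) = eB (k + 3) := by
      have := eB_congr hC; rwa [eB_even, eB_even] at this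
    have f12 : fB (k + 1) = fB (k + 2) := by
      have := fB_congr hD; rw [fB_odd, fB_odd] at this; exact Bool.not_inj this
    have f04 : fB k = fB (k + 4) := fB_same_parity (by omega) e04
    have f13 : fB (k + 1) = fB (k + 3) := fB_same_parity (by omega) e13
    have f01 : fB k = fB (k + 1) := f03.trans f13.symm
    have f23 : fB (k + 2) = fB (k + 3) := f12.symm.trans f13
    have f34 : fB (k + 3) = fB (k + 4) := f03.symm.trans f04
    obtain ⟨m, hm⟩ : ∃ m, k = 2 * m ∨ k = 2 * m + 1 := ⟨k / 2, by omega⟩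
    rcases hm with rfl | rfl
    · rcases Nat.mod_two_eq_zero_or_one m with hp | hp
      · exact pair_even (by omega) f01
      · rw [show 2 * m + 2 = 2 * (m + 1) by omega,
          show 2 * m + 3 = 2 * (m + 1) + 1 by omega] at f23
        exact pair_even (by omega) f23
    · have f12' : fB (2 * (m + 1)) = fB (2 * (m + 1) + 1) := by
        rw [show 2 * (m + 1) + 1 = 2 * m + 1 + 2 by omega,
          show 2 * (m + 1) = 2 * m + 1 + 1 by omega]
        exact f12
      have f34' : fB (2 * (m + 2)) = fB (2 * (m + 2) + 1) := by
        rw [show 2 * (m + 2) + 1 = 2 * m + 1 + 4 by omega,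
          show 2 * (m + 2) = 2 * m + 1 + 3 by omega]
        exact f34
      rcases Nat.mod_two_eq_zero_or_one m with hp | hp
      · exact pair_even (m := m + 2) (by omega) f34'
      · exact pair_even (m := m + 1) (by omega) f12'
  · -- odd start: fB must alternate on [k, k+4]
    have hA := h 0 (by norm_num); have hB := h 1 (by norm_num)
    have hC := h 2 (by norm_num); have hD := h 3 (by norm_num)
    rw [show 2 * k + 1 + 0 = 2 * k + 1 by omega,
      show 2 * k + 1 + 9 - 1 - 0 = 2 * (k + 4) + 1 by omega] at hA
    rw [show 2 * k + 1 + 1 = 2 * (k + 1) by omega,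
      show 2 * k + 1 + 9 - 1 - 1 = 2 * (k + 4) by omega] at hB
    rw [show 2 * k + 1 + 2 = 2 * (k + 1) + 1 by omega,
      show 2 * k + 1 + 9 - 1 - 2 = 2 * (k + 3) + 1 by omega] at hC
    rw [show 2 * k + 1 + 3 = 2 * (k + 2) by omega,
      show 2 * k + 1 + 9 - 1 - 3 = 2 * (k + 3) by omega] at hD
    have f04 : fB k = fB (k + 4) := by
      have := fB_congr hA; rw [fB_odd, fB_odd] at this; exact Bool.not_inj this
    have e14 : eB (k + 1) = eB (k + 4) := by
      have := eB_congr hB; rwa [eB_even, eB_even] at this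
    have f13 : fB (k + 1) = fB (k + 3) := by
      have := fB_congr hC; rw [fB_odd, fB_odd] at this; exact Bool.not_inj this
    have e23 : eB (k + 2) = eB (k + 3) := by
      have := eB_congr hD; rwa [eB_even, eB_even] at this
    have f14 : fB (k + 1) = ! fB (k + 4) := fB_diff_parity (by omega) e14
    have f23 : fB (k + 2) = ! fB (k + 3) := fB_diff_parity (by omega) e23
    have f01 : fB k ≠ fB (k + 1) := by
      rw [f04, f14]; cases fB (k + 4) <;> simp
    have f12 : fB (k + 1) ≠ fB (k + 2) := by
      rw [f13, f23]; cases fB (k + 3) <;> simp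
    have f23' : fB (k + 2) ≠ fB (k + 3) := by
      rw [f23]; cases fB (k + 3) <;> simp
    have f34 : fB (k + 3) ≠ fB (k + 4) := by
      rw [← f13, f14]; cases fB (k + 4) <;> simp
    obtain ⟨m, hm⟩ : ∃ m, k = 2 * m ∨ k = 2 * m + 1 := ⟨k / 2, by omega⟩
    rcases hm with rfl | rfl
    · rcases Nat.mod_two_eq_zero_or_one m with hp | hp
      · rw [show 2 * m + 2 = 2 * (m + 1) by omega,
          show 2 * m + 3 = 2 * (m + 1) + 1 by omega] at f23'
        exact f23' (pair_odd (by omega))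
      · exact f01 (pair_odd (by omega))
    · have f12' : fB (2 * (m + 1)) ≠ fB (2 * (m + 1) + 1) := by
        rw [show 2 * (m + 1) + 1 = 2 * m + 1 + 2 by omega,
          show 2 * (m + 1) = 2 * m + 1 + 1 by omega]
        exact f12
      have f34' : fB (2 * (m + 2)) ≠ fB (2 * (m + 2) + 1) := by
        rw [show 2 * (m + 2) + 1 = 2 * m + 1 + 4 by omega,
          show 2 * (m + 2) = 2 * m + 1 + 3 by omega]
        exact f34
      rcases Nat.mod_two_eq_zero_or_one m with hp | hp
      · exact f12' (pair_odd (m := m + 1) (by omega))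
      · exact f34' (pair_odd (m := m + 2) (by omega))

lemma pal_step {m : ℕ} (hm : 2 ≤ m) (h : HasPalFactor rsQ m) : HasPalFactor rsQ (m - 2) := by
  obtain ⟨i, h⟩ := h
  refine ⟨i + 1, fun j hj => ?_⟩
  have hh := h (j + 1) (by omega)
  rw [show i + 1 + j = i + (j + 1) by omega,
    show i + 1 + (m - 2) - 1 - j = i + m - 1 - (j + 1) by omega]
  exact hh

/-- The quaternary Rudin–Shapiro sequence contains no palindromic factor of length 8
and none of length 9; consequently it contains no palindromic factor of any length
`m ≥ 8`, and it is not palindromic. -/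
theorem rsQ_not_palindromic :
    ¬ HasPalFactor rsQ 8 ∧ ¬ HasPalFactor rsQ 9 ∧
    (∀ m : ℕ, 8 ≤ m → ¬ HasPalFactor rsQ m) ∧ ¬ Palindromic rsQ := by
  have key : ∀ m : ℕ, 8 ≤ m → ¬ HasPalFactor rsQ m := by
    intro m
    induction m using Nat.strong_induction_on with
    | _ m ih =>
      intro hm hp
      rcases eq_or_lt_of_le hm with h8 | h8
      · exact no_pal8 (h8 ▸ hp)
      rcases eq_or_lt_of_le (show 9 ≤ m by omega) with h9 | h9
      · exact no_pal9 (h9 ▸ hp)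
      · exact ih (m - 2) (by omega) (by omega) (pal_step (by omega) hp)
  refine ⟨no_pal8, no_pal9, key, fun hp => ?_⟩
  obtain ⟨ℓ, hℓ, hpal⟩ := hp 8
  exact key ℓ hℓ hpal
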